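/- Let p be a prime, let R be a finite set, and let c assign to each unordered pair of distinct elements of R a value in ZMod p. Let G be a finite simple graph and let J = {v_1, …, v_s} be an independent set of vertices of G. Write N_i for the neighborhood of v_i in G. Suppose f : V(G)∖J → R and h, h' : J → R are injections such that: (1) f(V(G)∖J) is disjoint from h(J) ∪ h'(J); (2) h(v) ≠ h'(v') for all v ≠ v' in J; and (3) the number of indices i with Σ_{u∈N_i} c({h(v_i), f(u)}) ≠ Σ_{u∈N_i} c({h'(v_i), f(u)}) is at least p. Then there exists an injection F : V(G) → R extending f with F(v_i) ∈ {h(v_i), h'(v_i)} for every i, such that Σ_{{x,y} ∈ E(G)} c({F(x), F(y)}) = 0; in particular F is a zero-sum copy of G. -/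

import Mathlib

open Pointwise

lemma mem_sum_aux {ι M : Type*} [DecidableEq ι] [AddCommMonoid M] [DecidableEq M]
    (S : ι → Finset M) (T : Finset ι) (x : M) (hx : x ∈ ∑ i ∈ T, S i) :
    ∃ g : ι → M, (∀ i ∈ T, g i ∈ S i) ∧ ∑ i ∈ T, g i = x := by
  induction T using Finset.cons_induction generalizing x with
  | empty =>
    exact ⟨fun _ => 0, by simp, by simpa [eq_comm, Finset.mem_zero] using hx⟩
  | cons j T hj ih =>
    rw [Finset.sum_cons, Finset.mem_add] at hx
    obtain ⟨y, hy, z, hz, hyz⟩ := hx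
    obtain ⟨g, hg, hgsum⟩ := ih z hz
    refine ⟨Function.update g j y, ?_, ?_⟩
    · intro i hi
      rcases Finset.mem_cons.1 hi with rfl | hi
      · simpa using hy
      · rw [Function.update_of_ne (fun e => hj (by rw [← e]; exact hi))]; exact hg i hi
    · have hrest : ∑ i ∈ T, Function.update g j y i = ∑ i ∈ T, g i :=
        Finset.sum_congr rfl fun i hi => Function.update_of_ne (fun e => hj (by rw [← e]; exact hi)) _ _
      rw [Finset.sum_cons, Function.update_self, hrest, hgsum, hyz]

lemma card_sum_aux {ι : Type*} [DecidableEq ι] {p : ℕ} (hp : p.Prime)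
    (a b : ι → ZMod p) (T : Finset ι) (hab : ∀ i ∈ T, a i ≠ b i) :
    min p (T.card + 1) ≤ (∑ i ∈ T, ({a i, b i} : Finset (ZMod p))).card := by
  induction T using Finset.cons_induction with
  | empty => simp
  | cons j T hj ih =>
    have ih' := ih fun i hi => hab i (Finset.mem_cons_of_mem hi)
    have h1 : (1:ℕ) ≤ min p (T.card + 1) := le_min hp.one_lt.le (by omega)
    have hne : (∑ i ∈ T, ({a i, b i} : Finset (ZMod p))).Nonempty :=
      Finset.card_pos.1 (by omega)
    rw [Finset.sum_cons]
    have := ZMod.cauchy_davenport hp (s := {a j, b j}) (t := ∑ i ∈ T, ({a i, b i} : Finset (ZMod p)))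
      ⟨a j, by simp⟩ hne
    rw [Finset.card_pair (hab j (Finset.mem_cons_self _ _))] at this
    rw [Finset.card_cons]
    omega

theorem stmt_7 {V R : Type*} [Fintype V] [DecidableEq V] [Fintype R] [DecidableEq R]
    (p : ℕ) (hp : p.Prime) (c : Sym2 R → ZMod p)
    (G : SimpleGraph V) [DecidableRel G.Adj]
    (s : ℕ) (v : Fin s → V) (hv : Function.Injective v)
    (hindep : ∀ i j, ¬ G.Adj (v i) (v j))
    (f : V → R) (h h' : Fin s → R)
    (hf : Set.InjOn f {x | ∀ i, x ≠ v i})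
    (hh : Function.Injective h) (hh' : Function.Injective h')
    (h1 : ∀ x, (∀ i, x ≠ v i) → ∀ i, f x ≠ h i ∧ f x ≠ h' i)
    (h2 : ∀ i j, i ≠ j → h i ≠ h' j)
    (h3 : p ≤ (Finset.univ.filter fun i =>
        (∑ u ∈ G.neighborFinset (v i), c s(h i, f u)) ≠
        ∑ u ∈ G.neighborFinset (v i), c s(h' i, f u)).card) :
    ∃ F : V → R, Function.Injective F ∧
      (∀ x, (∀ i, x ≠ v i) → F x = f x) ∧
      (∀ i, F (v i) = h i ∨ F (v i) = h' i) ∧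
      ∑ e ∈ G.edgeFinset, c (Sym2.map F e) = 0 := by
  classical
  haveI : Fact p.Prime := ⟨hp⟩
  set a : Fin s → ZMod p := fun i => ∑ u ∈ G.neighborFinset (v i), c s(h i, f u) with ha
  set b : Fin s → ZMod p := fun i => ∑ u ∈ G.neighborFinset (v i), c s(h' i, f u) with hb
  set W : Finset (Fin s) := Finset.univ.filter (fun i => a i ≠ b i) with hW
  have hWcard : p ≤ W.card := h3
  -- the achievable sums over W cover everything
  have hS : (∑ i ∈ W, ({a i, b i} : Finset (ZMod p))) = Finset.univ := by
    apply Finset.eq_univ_of_card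
    have hle := card_sum_aux hp a b W (fun i hi => (Finset.mem_filter.1 hi).2)
    have hcardle : (∑ i ∈ W, ({a i, b i} : Finset (ZMod p))).card ≤ Fintype.card (ZMod p) :=
      Finset.card_le_univ _
    have hcardp : Fintype.card (ZMod p) = p := ZMod.card p
    omega
  set C : ZMod p := ∑ e ∈ G.edgeFinset.filter (fun e => ∀ i, v i ∉ e), c (Sym2.map f e) with hC
  obtain ⟨g, hg, hgsum⟩ := mem_sum_aux _ W (-(C + ∑ i ∈ Wᶜ, b i))
    (hS ▸ Finset.mem_univ _)
  set E : Fin s → R := fun i => if i ∈ W ∧ g i = a i then h i else h' i with hE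
  set val : Fin s → ZMod p := fun i => if i ∈ W ∧ g i = a i then a i else b i with hVal
  have hEor : ∀ i, E i = h i ∨ E i = h' i := by
    intro i; by_cases hc : i ∈ W ∧ g i = a i <;> simp [hE, hc]
  have hval : ∀ i, (∑ u ∈ G.neighborFinset (v i), c s(E i, f u)) = val i := by
    intro i; by_cases hc : i ∈ W ∧ g i = a i <;> simp [hE, hVal, hc] <;> rfl
  have hvalW : ∀ i ∈ W, val i = g i := by
    intro i hi
    by_cases hc : g i = a i
    · simp [hVal, hi, hc]
    · have : g i ∈ ({a i, b i} : Finset (ZMod p)) := hg i hi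
      rcases Finset.mem_insert.1 this with h' | h'
      · exact absurd h' hc
      · simp only [Finset.mem_singleton] at h'
        simp only [hVal]
        rw [if_neg (fun hcc => hc hcc.2), h']
  have hvalW' : ∀ i ∉ W, val i = b i := by
    intro i hi; simp [hVal, hi]
  have hsumval : ∑ i : Fin s, val i = -C := by
    rw [← Finset.sum_add_sum_compl W val,
      Finset.sum_congr rfl hvalW,
      Finset.sum_congr rfl (fun i hi => hvalW' i (Finset.mem_compl.1 hi)),
      hgsum]
    ring
  -- definition of F
  set F : V → R := fun x => if hx : ∃ i, x = v i then E (Classical.choose hx) else f x with hF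
  have hFv : ∀ i, F (v i) = E i := by
    intro i
    have hx : ∃ j, v i = v j := ⟨i, rfl⟩
    have hch : Classical.choose hx = i := (hv (Classical.choose_spec hx)).symm
    simp only [hF]
    rw [dif_pos hx, hch]
  have hFf : ∀ x, (∀ i, x ≠ v i) → F x = f x := by
    intro x hx
    simp only [hF]
    rw [dif_neg (by push_neg; exact hx)]
  have hEinj : Function.Injective E := by
    intro i j hij
    by_cases hne : i = j
    · exact hne
    exfalso
    by_cases hi : i ∈ W ∧ g i = a i <;> by_cases hj : j ∈ W ∧ g j = a j <;>
      simp only [hE, hi, hj, if_pos, if_neg, if_true, if_false] at hij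
    · exact hne (hh hij)
    · exact h2 i j hne hij
    · exact h2 j i (Ne.symm hne) hij.symm
    · exact hne (hh' hij)
  have hFinj : Function.Injective F := by
    intro x y hxy
    by_cases hx : ∃ i, x = v i <;> by_cases hy : ∃ i, y = v i
    · obtain ⟨i, rfl⟩ := hx; obtain ⟨j, rfl⟩ := hy
      rw [hFv, hFv] at hxy
      exact congrArg v (hEinj hxy)
    · obtain ⟨i, rfl⟩ := hx
      push_neg at hy
      rw [hFv, hFf y hy] at hxy
      rcases hEor i with hE1 | hE1 <;> rw [hE1] at hxy
      · exact absurd hxy.symm (h1 y hy i).1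
      · exact absurd hxy.symm (h1 y hy i).2
    · obtain ⟨j, rfl⟩ := hy
      push_neg at hx
      rw [hFv, hFf x hx] at hxy
      rcases hEor j with hE1 | hE1 <;> rw [hE1] at hxy
      · exact absurd hxy (h1 x hx j).1
      · exact absurd hxy (h1 x hx j).2
    · push_neg at hx hy
      rw [hFf x hx, hFf y hy] at hxy
      exact hf hx hy hxy
  refine ⟨F, hFinj, hFf, fun i => by rw [hFv]; exact hEor i, ?_⟩
  -- decomposition of the edge sum
  have hunion : G.edgeFinset =
      (G.edgeFinset.filter (fun e => ∀ i, v i ∉ e)) ∪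
        Finset.univ.biUnion (fun i => G.incidenceFinset (v i)) := by
    ext e
    simp only [Finset.mem_union, Finset.mem_filter, Finset.mem_biUnion, Finset.mem_univ,
      true_and, SimpleGraph.incidenceFinset_eq_filter, Finset.mem_filter]
    constructor
    · intro he
      by_cases hcase : ∃ i, v i ∈ e
      · exact Or.inr (by obtain ⟨i, hi⟩ := hcase; exact ⟨i, he, hi⟩)
      · push_neg at hcase; exact Or.inl ⟨he, hcase⟩
    · rintro (⟨he, -⟩ | ⟨i, he, -⟩) <;> exact he
  have hdisj : Disjoint (G.edgeFinset.filter (fun e => ∀ i, v i ∉ e))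
      (Finset.univ.biUnion (fun i => G.incidenceFinset (v i))) := by
    rw [Finset.disjoint_left]
    intro e he he'
    obtain ⟨-, hno⟩ := Finset.mem_filter.1 he
    obtain ⟨i, -, hi⟩ := Finset.mem_biUnion.1 he'
    rw [SimpleGraph.mem_incidenceFinset] at hi
    exact hno i hi.2
  have hpair : ∀ i j, i ≠ j →
      Disjoint (G.incidenceFinset (v i)) (G.incidenceFinset (v j)) := by
    intro i j hij
    rw [Finset.disjoint_left]
    intro e hei hej
    rw [SimpleGraph.mem_incidenceFinset] at hei hej
    have hvij : v i ≠ v j := fun hvv => hij (hv hvv)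
    have : e = s(v i, v j) := (Sym2.mem_and_mem_iff hvij).1 ⟨hei.2, hej.2⟩
    have hadj : G.Adj (v i) (v j) := by
      have he := hei.1
      rw [this] at he
      exact G.mem_edgeSet.1 he
    exact hindep i j hadj
  have hIncIm : ∀ i, G.incidenceFinset (v i) =
      (G.neighborFinset (v i)).image (fun u => s(v i, u)) := by
    intro i
    ext e
    rw [SimpleGraph.incidenceFinset_eq_filter, Finset.mem_filter, Finset.mem_image]
    constructor
    · rintro ⟨he, hvi⟩
      rw [SimpleGraph.mem_edgeFinset] at he
      induction e with
      | _ x y =>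
        rw [Sym2.mem_iff] at hvi
        rcases hvi with rfl | rfl
        · exact ⟨y, by simpa using he, rfl⟩
        · exact ⟨x, by simpa [SimpleGraph.adj_comm] using he, Sym2.eq_swap⟩
    · rintro ⟨u, hu, rfl⟩
      rw [SimpleGraph.mem_neighborFinset] at hu
      exact ⟨SimpleGraph.mem_edgeFinset.2 hu, Sym2.mem_mk_left _ _⟩
  rw [hunion, Finset.sum_union hdisj,
    Finset.sum_biUnion (fun i _ j _ hij => hpair i j hij)]
  have hB : ∑ e ∈ G.edgeFinset.filter (fun e => ∀ i, v i ∉ e), c (Sym2.map F e) = C := by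
    apply Finset.sum_congr rfl
    intro e he
    obtain ⟨-, hno⟩ := Finset.mem_filter.1 he
    induction e with
    | _ x y =>
      have hxn : ∀ i, x ≠ v i := fun i hx => hno i (by rw [← hx]; exact Sym2.mem_mk_left _ _)
      have hyn : ∀ i, y ≠ v i := fun i hy => hno i (by rw [← hy]; exact Sym2.mem_mk_right _ _)
      simp only [Sym2.map_pair_eq, hFf x hxn, hFf y hyn]
  have hI : ∀ i, ∑ e ∈ G.incidenceFinset (v i), c (Sym2.map F e) = val i := by
    intro i
    rw [hIncIm i, Finset.sum_image]
    · rw [← hval i]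
      apply Finset.sum_congr rfl
      intro u hu
      rw [SimpleGraph.mem_neighborFinset] at hu
      have hun : ∀ j, u ≠ v j := by
        intro j huj
        rw [huj] at hu
        exact hindep i j hu
      simp only [Sym2.map_pair_eq, hFv i, hFf u hun]
    · intro u hu u' hu' huu
      rw [Finset.mem_coe, SimpleGraph.mem_neighborFinset] at hu hu'
      rw [Sym2.eq_iff] at huu
      rcases huu with ⟨-, h⟩ | ⟨hvu, -⟩
      · exact h
      · exact absurd hvu.symm hu'.ne'
  rw [hB, Finset.sum_congr rfl (fun i _ => hI i), hsumval]
  ring
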